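/- Let Γ = Circ(n; S) be a circulant and let 𝒜_n(S) = { j ∈ {0,...,n-1} : Σ_{s∈S} e^{2πijs/n} = 0 }. If there exists a divisor d of n with 1 < d < n dividing every j ∈ 𝒜_n(S), then Γ is not distance magic. -/

import Mathlib

/-- If there is a divisor d of n with 1 < d < n dividing every admissible j
(i.e. every j ∈ {0,...,n-1} with Σ_{s∈S} e^{2πijs/n} = 0), then the circulant
Circ(n;S) is not distance magic. -/
theorem stmt_3 (n : ℕ) (hn : 0 < n) (S : Finset (ZMod n))
    (hSsym : ∀ s ∈ S, -s ∈ S) (h0 : (0 : ZMod n) ∉ S)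
    (d : ℕ) (hdvd : d ∣ n) (hd1 : 1 < d) (hdn : d < n)
    (hdiv : ∀ j < n,
      (∑ s ∈ S, Complex.exp (2 * (Real.pi : ℂ) * Complex.I * (j : ℂ) * (s.val : ℂ) / (n : ℂ)) = 0)
      → d ∣ j) :
    ¬ ∃ (ℓ : ZMod n → ℕ) (κ : ℕ), 0 < κ ∧
        Set.BijOn ℓ Set.univ (Set.Icc 1 n) ∧
        ∀ x : ZMod n, ∑ s ∈ S, ℓ (x + s) = κ := by
  rintro ⟨ℓ, κ, hκ, hbij, hmagic⟩
  haveI : NeZero n := ⟨hn.ne'⟩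
  set ζ : ℂ := Complex.exp (2 * Real.pi * Complex.I / n) with hζdef
  have hprim : IsPrimitiveRoot ζ n := Complex.isPrimitiveRoot_exp n hn.ne'
  have hζ1 : ζ ^ n = 1 := hprim.pow_eq_one
  -- ζ^a only depends on a mod n
  have hmod : ∀ a b : ℕ, a % n = b % n → ζ ^ a = ζ ^ b := by
    intro a b hab
    rw [← Nat.div_add_mod a n, ← Nat.div_add_mod b n, pow_add, pow_add, pow_mul, pow_mul,
      hζ1, one_pow, one_pow, hab]
  set χ : ℕ → ZMod n → ℂ := fun j x => ζ ^ (j * x.val) with hχdef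
  have hadd : ∀ (j : ℕ) (a b : ZMod n), χ j (a + b) = χ j a * χ j b := by
    intro j a b
    show ζ ^ (j * (a + b).val) = ζ ^ (j * a.val) * ζ ^ (j * b.val)
    rw [← pow_add, ← mul_add]
    apply hmod
    rw [ZMod.val_add, Nat.mul_mod, Nat.mod_mod_of_dvd, ← Nat.mul_mod]
    exact dvd_refl n
  have hχ0 : ∀ j : ℕ, χ j 0 = 1 := by
    intro j; show ζ ^ (j * (0 : ZMod n).val) = 1
    simp [ZMod.val_zero]
  -- sums over ZMod n via val
  have hsum_val : ∀ f : ℕ → ℂ, ∑ x : ZMod n, f x.val = ∑ i ∈ Finset.range n, f i := by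
    intro f
    apply Finset.sum_nbij' (i := ZMod.val) (j := fun i => (i : ZMod n))
    · intro a _; exact Finset.mem_range.mpr (ZMod.val_lt a)
    · intro a _; exact Finset.mem_univ _
    · intro a _; exact ZMod.natCast_rightInverse a
    · intro a ha; exact ZMod.val_natCast_of_lt (Finset.mem_range.mp ha)
    · intro a _; rfl
  -- orthogonality: sum over the group
  have horth : ∀ j : ℕ, j < n → j ≠ 0 → ∑ x : ZMod n, χ j x = 0 := by
    intro j hjn hj0
    have : ∑ x : ZMod n, χ j x = ∑ i ∈ Finset.range n, (ζ ^ j) ^ i := by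
      rw [← hsum_val (fun i => (ζ ^ j) ^ i)]
      exact Finset.sum_congr rfl fun x _ => by
        show ζ ^ (j * x.val) = (ζ ^ j) ^ x.val
        rw [pow_mul]
    rw [this, geom_sum_eq (hprim.pow_ne_one_of_pos_of_lt hj0 hjn)]
    rw [← pow_mul, mul_comm j n, pow_mul, hζ1, one_pow]
    simp
  -- delta: sum over characters
  have hdelta : ∀ a : ZMod n, ∑ j ∈ Finset.range n, χ j a = if a = 0 then (n : ℂ) else 0 := by
    intro a
    have hrw : ∀ j : ℕ, χ j a = (ζ ^ a.val) ^ j := by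
      intro j; show ζ ^ (j * a.val) = (ζ ^ a.val) ^ j
      rw [mul_comm, pow_mul]
    rw [Finset.sum_congr rfl fun j _ => hrw j]
    by_cases ha : a = 0
    · simp [ha, ZMod.val_zero]
    · rw [if_neg ha, geom_sum_eq, ← pow_mul, mul_comm a.val n, pow_mul, hζ1, one_pow]
      · simp
      · refine hprim.pow_ne_one_of_pos_of_lt ?_ (ZMod.val_lt a)
        exact fun h => ha ((ZMod.val_eq_zero a).mp h)
  -- Fourier coefficients of ℓ
  set F : ℕ → ℂ := fun j => ∑ y : ZMod n, χ j y * (ℓ y : ℂ) with hFdef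
  -- eigenvalue relation
  have hkill : ∀ j : ℕ, j < n → j ≠ 0 → (∑ s ∈ S, χ j s) * F j = 0 := by
    intro j hjn hj0
    have key : ∑ x : ZMod n, χ j x * ((∑ s ∈ S, ℓ (x + s) : ℕ) : ℂ) = (κ : ℂ) * ∑ x : ZMod n, χ j x := by
      rw [Finset.mul_sum]
      exact Finset.sum_congr rfl fun x _ => by rw [hmagic x, mul_comm]
    have lhs : ∑ x : ZMod n, χ j x * ((∑ s ∈ S, ℓ (x + s) : ℕ) : ℂ)
        = (∑ s ∈ S, χ j (-s)) * F j := by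
      rw [Finset.sum_mul]
      have : ∀ x : ZMod n, χ j x * ((∑ s ∈ S, ℓ (x + s) : ℕ) : ℂ)
          = ∑ s ∈ S, χ j x * (ℓ (x + s) : ℂ) := by
        intro x; push_cast; rw [Finset.mul_sum]
      rw [Finset.sum_congr rfl fun x _ => this x, Finset.sum_comm]
      refine Finset.sum_congr rfl fun s _ => ?_
      have := Fintype.sum_equiv (Equiv.addRight s)
        (fun x => χ j x * (ℓ (x + s) : ℂ)) (fun y => (χ j (-s) * χ j y) * (ℓ y : ℂ)) ?_
      · rw [this, hFdef]
        simp only []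
        rw [Finset.mul_sum]
        exact Finset.sum_congr rfl fun y _ => by ring
      · intro x
        simp only [Equiv.coe_addRight]
        rw [← hadd j (-s) (x + s)]
        congr 2
        abel
    have hneg : ∑ s ∈ S, χ j (-s) = ∑ s ∈ S, χ j s := by
      apply Finset.sum_nbij' (i := fun s => -s) (j := fun s => -s)
      · intro s hs; exact hSsym s hs
      · intro s hs; exact hSsym s hs
      · intro s _; exact neg_neg s
      · intro s _; exact neg_neg s
      · intro s _; rfl
    rw [← hneg, ← lhs, key, horth j hjn hj0, mul_zero]
  -- the eigenvalue sum equals the exp sum of the hypothesis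
  have hexp : ∀ j : ℕ, (∑ s ∈ S, χ j s)
      = ∑ s ∈ S, Complex.exp (2 * (Real.pi : ℂ) * Complex.I * (j : ℂ) * (s.val : ℂ) / (n : ℂ)) := by
    intro j
    refine Finset.sum_congr rfl fun s _ => ?_
    show ζ ^ (j * s.val) = _
    rw [hζdef, ← Complex.exp_nat_mul]
    congr 1
    push_cast
    ring
  -- the shift
  set m : ZMod n := ((n / d : ℕ) : ZMod n) with hmdef
  have hndpos : 0 < n / d := Nat.div_pos (Nat.le_of_dvd hn hdvd) (lt_trans one_pos hd1)
  have hndlt : n / d < n := Nat.div_lt_self hn hd1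
  have hmval : m.val = n / d := ZMod.val_natCast_of_lt hndlt
  have hmne : m ≠ 0 := by
    intro h
    rw [h, ZMod.val_zero] at hmval
    omega
  -- χ j (-m) = 1 whenever F j ≠ 0, for j in range n
  have hchi_one : ∀ j ∈ Finset.range n, F j ≠ 0 → χ j (-m) = 1 := by
    intro j hj hF
    have hjn := Finset.mem_range.mp hj
    have hχm : χ j m = 1 := by
      rcases eq_or_ne j 0 with rfl | hj0
      · show ζ ^ (0 * m.val) = 1; simp
      · have hlam : (∑ s ∈ S, χ j s) = 0 := by
          rcases mul_eq_zero.mp (hkill j hjn hj0) with h | h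
          · exact h
          · exact absurd h hF
        have hdj : d ∣ j := hdiv j hjn (by rw [← hexp]; exact hlam)
        show ζ ^ (j * m.val) = 1
        rw [hprim.pow_eq_one_iff_dvd]
        rw [hmval]
        obtain ⟨t, rfl⟩ := hdj
        rw [mul_comm d t, mul_assoc, Nat.mul_div_cancel' hdvd]
        exact ⟨t, (mul_comm t n)⟩
    have := hadd j m (-m)
    rw [add_neg_cancel, hχ0, hχm, one_mul] at this
    exact this.symm
  -- Fourier inversion
  have hinv : ∀ x : ZMod n, ∑ j ∈ Finset.range n, χ j (-x) * F j = (n : ℂ) * (ℓ x : ℂ) := by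
    intro x
    have step : ∀ j : ℕ, χ j (-x) * F j = ∑ y : ZMod n, χ j (y - x) * (ℓ y : ℂ) := by
      intro j
      rw [hFdef]
      simp only []
      rw [Finset.mul_sum]
      refine Finset.sum_congr rfl fun y _ => ?_
      rw [sub_eq_add_neg, add_comm, hadd j (-x) y]
      ring
    rw [Finset.sum_congr rfl fun j _ => step j, Finset.sum_comm]
    have inner : ∀ y : ZMod n, ∑ j ∈ Finset.range n, χ j (y - x) * (ℓ y : ℂ)
        = (if y - x = 0 then (n : ℂ) else 0) * (ℓ y : ℂ) := by
      intro y
      rw [← Finset.sum_mul, hdelta]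
    rw [Finset.sum_congr rfl fun y _ => inner y]
    rw [Finset.sum_eq_single x]
    · rw [if_pos (sub_self x)]
    · intro y _ hyx
      rw [if_neg (sub_ne_zero.mpr hyx), zero_mul]
    · intro h; exact absurd (Finset.mem_univ x) h
  -- conclude ℓ m = ℓ 0
  have hFm : ∑ j ∈ Finset.range n, χ j (-m) * F j = ∑ j ∈ Finset.range n, F j := by
    refine Finset.sum_congr rfl fun j hj => ?_
    rcases eq_or_ne (F j) 0 with h | h
    · rw [h, mul_zero]
    · rw [hchi_one j hj h, one_mul]
  have hF0 : ∑ j ∈ Finset.range n, χ j (-(0 : ZMod n)) * F j = ∑ j ∈ Finset.range n, F j := by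
    refine Finset.sum_congr rfl fun j _ => ?_
    rw [neg_zero, hχ0, one_mul]
  have : (n : ℂ) * (ℓ m : ℂ) = (n : ℂ) * (ℓ 0 : ℂ) := by
    rw [← hinv m, ← hinv 0, hFm, hF0]
  have hℓeq : ℓ m = ℓ 0 := by
    have hne : (n : ℂ) ≠ 0 := Nat.cast_ne_zero.mpr hn.ne'
    exact_mod_cast mul_left_cancel₀ hne this
  have := hbij.injOn (Set.mem_univ m) (Set.mem_univ (0 : ZMod n)) hℓeq
  exact hmne this
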